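/- The isotropy group of the ternary cubic form xyz in GL(3,ℝ) consists exactly of products P·D where P is a 3×3 permutation matrix and D = diag(a, b, (ab)⁻¹) with a,b ≠ 0. -/

import Mathlib

open Matrix Polynomial

/-- Entry formula for a permutation matrix times a diagonal matrix. -/
lemma perm_diag_apply' (σ : Equiv.Perm (Fin 3)) (d : Fin 3 → ℝ) (i j : Fin 3) :
    (σ.permMatrix ℝ * diagonal d) i j = if σ i = j then d j else 0 := by
  simp [Equiv.Perm.permMatrix, PEquiv.toMatrix, Equiv.toPEquiv, Matrix.mul_apply, diagonal,
    Finset.sum_ite_eq]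

/-- If a product of three affine-linear functions of `t` vanishes identically, one of them
is identically zero. -/
lemma key_vanish (a0 b0 a1 b1 a2 b2 : ℝ)
    (h : ∀ t : ℝ, (a0 * t + b0) * (a1 * t + b1) * (a2 * t + b2) = 0) :
    (a0 = 0 ∧ b0 = 0) ∨ (a1 = 0 ∧ b1 = 0) ∨ (a2 = 0 ∧ b2 = 0) := by
  have hp : (C a0 * X + C b0) * (C a1 * X + C b1) * (C a2 * X + C b2) = (0 : ℝ[X]) := by
    apply Polynomial.funext; intro t; simpa using h t
  have coeffs : ∀ p q : ℝ, C p * X + C q = 0 → p = 0 ∧ q = 0 := by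
    intro p q h0
    constructor
    · have := congrArg (fun r => Polynomial.coeff r 1) h0; simpa using this
    · have := congrArg (fun r => Polynomial.coeff r 0) h0; simpa using this
  rcases mul_eq_zero.mp hp with hq | h2
  · rcases mul_eq_zero.mp hq with h0 | h1
    · exact Or.inl (coeffs a0 b0 h0)
    · exact Or.inr (Or.inl (coeffs a1 b1 h1))
  · exact Or.inr (Or.inr (coeffs a2 b2 h2))

/-- Helper to finish each case of the forward direction. -/
lemma finish_case (g : Matrix (Fin 3) (Fin 3) ℝ) (σ : Equiv.Perm (Fin 3)) (a b c : ℝ)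
    (habc : a * b * c = 1)
    (hgeq : g = σ.permMatrix ℝ * diagonal ![a, b, c]) :
    ∃ (σ : Equiv.Perm (Fin 3)) (a b : ℝ), a ≠ 0 ∧ b ≠ 0 ∧
      g = σ.permMatrix ℝ * Matrix.diagonal ![a, b, (a * b)⁻¹] := by
  have ha : a ≠ 0 := by rintro rfl; simp at habc
  have hb : b ≠ 0 := by rintro rfl; simp at habc
  have hc : c = (a * b)⁻¹ := eq_inv_of_mul_eq_one_right habc
  subst hc
  exact ⟨σ, a, b, ha, hb, hgeq⟩

/-- The isotropy group of the ternary cubic form `xyz` in `GL(3,ℝ)` consists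
exactly of products `P · diag(a, b, (ab)⁻¹)` with `P` a permutation matrix and
`a, b ≠ 0`. -/
theorem isotropy_xyz (g : Matrix (Fin 3) (Fin 3) ℝ) (hg : IsUnit g.det) :
    (∀ v : Fin 3 → ℝ, g.mulVec v 0 * g.mulVec v 1 * g.mulVec v 2 = v 0 * v 1 * v 2) ↔
      ∃ (σ : Equiv.Perm (Fin 3)) (a b : ℝ), a ≠ 0 ∧ b ≠ 0 ∧
        g = (σ.permMatrix ℝ) * Matrix.diagonal ![a, b, (a * b)⁻¹] := by
  constructor
  · intro h
    -- find, for each pair of columns, a row vanishing on both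
    obtain ⟨i2, hi2a, hi2b⟩ : ∃ i : Fin 3, g i 0 = 0 ∧ g i 1 = 0 := by
      have h01 : ∀ t : ℝ, (g 0 0 * t + g 0 1) * (g 1 0 * t + g 1 1) * (g 2 0 * t + g 2 1) = 0 := by
        intro t
        have := h ![t, 1, 0]
        simp [Matrix.mulVec, dotProduct, Fin.sum_univ_three] at this
        rcases this with (h' | h') | h' <;> simp [h']
      rcases key_vanish _ _ _ _ _ _ h01 with h' | h' | h'
      exacts [⟨0, h'⟩, ⟨1, h'⟩, ⟨2, h'⟩]
    obtain ⟨i1, hi1a, hi1b⟩ : ∃ i : Fin 3, g i 0 = 0 ∧ g i 2 = 0 := by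
      have h02 : ∀ t : ℝ, (g 0 0 * t + g 0 2) * (g 1 0 * t + g 1 2) * (g 2 0 * t + g 2 2) = 0 := by
        intro t
        have := h ![t, 0, 1]
        simp [Matrix.mulVec, dotProduct, Fin.sum_univ_three] at this
        rcases this with (h' | h') | h' <;> simp [h']
      rcases key_vanish _ _ _ _ _ _ h02 with h' | h' | h'
      exacts [⟨0, h'⟩, ⟨1, h'⟩, ⟨2, h'⟩]
    obtain ⟨i0, hi0a, hi0b⟩ : ∃ i : Fin 3, g i 1 = 0 ∧ g i 2 = 0 := by
      have h12 : ∀ t : ℝ, (g 0 1 * t + g 0 2) * (g 1 1 * t + g 1 2) * (g 2 1 * t + g 2 2) = 0 := by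
        intro t
        have := h ![0, t, 1]
        simp [Matrix.mulVec, dotProduct, Fin.sum_univ_three] at this
        rcases this with (h' | h') | h' <;> simp [h']
      rcases key_vanish _ _ _ _ _ _ h12 with h' | h' | h'
      exacts [⟨0, h'⟩, ⟨1, h'⟩, ⟨2, h'⟩]
    -- no row of g vanishes entirely
    have hrow : ∀ i : Fin 3, g i 0 = 0 → g i 1 = 0 → g i 2 = 0 → False := by
      intro i h0 h1 h2
      have hdet : g.det = 0 := by
        apply Matrix.det_eq_zero_of_row_eq_zero i
        intro j; fin_cases j <;> assumption
      rw [hdet] at hg; simp at hg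
    have d01 : i0 ≠ i1 := by rintro rfl; exact hrow i0 hi1a hi0a hi0b
    have d02 : i0 ≠ i2 := by rintro rfl; exact hrow i0 hi2a hi0a hi0b
    have d12 : i1 ≠ i2 := by rintro rfl; exact hrow i1 hi1a hi2b hi1b
    have h111 := h ![1, 1, 1]
    simp [Matrix.mulVec, dotProduct, Fin.sum_univ_three] at h111
    fin_cases i0 <;> fin_cases i1 <;> fin_cases i2 <;>
        simp only [Fin.mk_zero, Fin.mk_one, Fin.reduceFinMk, show ((⟨2, by norm_num⟩ : Fin 3)) = 2 from rfl] at * <;>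
        first
          | exact absurd rfl d01
          | exact absurd rfl d02
          | exact absurd rfl d12
          | skip
    -- the six possible permutation shapes
    · -- i0 = 0, i1 = 1, i2 = 2
      simp only [hi0a, hi0b, hi1a, hi1b, hi2a, hi2b, Matrix.cons_val_zero, Matrix.cons_val_one,
        Matrix.head_cons, mul_one, mul_zero, zero_mul, add_zero, zero_add, one_mul] at h111
      refine finish_case g 1 (g 0 0) (g 1 1) (g 2 2) (by linear_combination h111) ?_
      ext i j
      fin_cases i <;> fin_cases j <;>
        simp [perm_diag_apply', Equiv.toPEquiv_apply, Equiv.Perm.one_apply,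
          hi0a, hi0b, hi1a, hi1b, hi2a, hi2b]
    · -- i0 = 0, i1 = 2, i2 = 1
      simp only [hi0a, hi0b, hi1a, hi1b, hi2a, hi2b, Matrix.cons_val_zero, Matrix.cons_val_one,
        Matrix.head_cons, mul_one, mul_zero, zero_mul, add_zero, zero_add, one_mul] at h111
      refine finish_case g (Equiv.swap 1 2) (g 0 0) (g 2 1) (g 1 2)
        (by linear_combination h111) ?_
      ext i j
      fin_cases i <;> fin_cases j <;>
        simp [perm_diag_apply', Equiv.toPEquiv_apply, Equiv.swap_apply_def,
          hi0a, hi0b, hi1a, hi1b, hi2a, hi2b]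
    · -- i0 = 1, i1 = 0, i2 = 2
      simp only [hi0a, hi0b, hi1a, hi1b, hi2a, hi2b, Matrix.cons_val_zero, Matrix.cons_val_one,
        Matrix.head_cons, mul_one, mul_zero, zero_mul, add_zero, zero_add, one_mul] at h111
      refine finish_case g (Equiv.swap 0 1) (g 1 0) (g 0 1) (g 2 2)
        (by linear_combination h111) ?_
      ext i j
      fin_cases i <;> fin_cases j <;>
        simp [perm_diag_apply', Equiv.toPEquiv_apply, Equiv.swap_apply_def,
          hi0a, hi0b, hi1a, hi1b, hi2a, hi2b]
    · -- i0 = 1, i1 = 2, i2 = 0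
      simp only [hi0a, hi0b, hi1a, hi1b, hi2a, hi2b, Matrix.cons_val_zero, Matrix.cons_val_one,
        Matrix.head_cons, mul_one, mul_zero, zero_mul, add_zero, zero_add, one_mul] at h111
      refine finish_case g (Equiv.swap 0 1 * Equiv.swap 0 2) (g 1 0) (g 2 1) (g 0 2)
        (by linear_combination h111) ?_
      ext i j
      fin_cases i <;> fin_cases j <;>
        simp [-Matrix.permMatrix_mul, perm_diag_apply', Equiv.toPEquiv_apply, Equiv.Perm.mul_apply, Equiv.swap_apply_def,
          hi0a, hi0b, hi1a, hi1b, hi2a, hi2b]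
    · -- i0 = 2, i1 = 0, i2 = 1
      simp only [hi0a, hi0b, hi1a, hi1b, hi2a, hi2b, Matrix.cons_val_zero, Matrix.cons_val_one,
        Matrix.head_cons, mul_one, mul_zero, zero_mul, add_zero, zero_add, one_mul] at h111
      refine finish_case g (Equiv.swap 0 2 * Equiv.swap 0 1) (g 2 0) (g 0 1) (g 1 2)
        (by linear_combination h111) ?_
      ext i j
      fin_cases i <;> fin_cases j <;>
        simp [-Matrix.permMatrix_mul, perm_diag_apply', Equiv.toPEquiv_apply, Equiv.Perm.mul_apply, Equiv.swap_apply_def,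
          hi0a, hi0b, hi1a, hi1b, hi2a, hi2b]
    · -- i0 = 2, i1 = 1, i2 = 0
      simp only [hi0a, hi0b, hi1a, hi1b, hi2a, hi2b, Matrix.cons_val_zero, Matrix.cons_val_one,
        Matrix.head_cons, mul_one, mul_zero, zero_mul, add_zero, zero_add, one_mul] at h111
      refine finish_case g (Equiv.swap 0 2) (g 2 0) (g 1 1) (g 0 2)
        (by linear_combination h111) ?_
      ext i j
      fin_cases i <;> fin_cases j <;>
        simp [perm_diag_apply', Equiv.toPEquiv_apply, Equiv.swap_apply_def,
          hi0a, hi0b, hi1a, hi1b, hi2a, hi2b]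
  · -- reverse direction
    rintro ⟨σ, a, b, ha, hb, rfl⟩ v
    set d : Fin 3 → ℝ := ![a, b, (a * b)⁻¹] with hd
    have hmv : ∀ i, (σ.permMatrix ℝ * Matrix.diagonal d).mulVec v i = d (σ i) * v (σ i) := by
      intro i
      simp only [Matrix.mulVec, dotProduct, perm_diag_apply']
      rw [Finset.sum_eq_single (σ i)]
      · simp
      · intro j _ hj; simp [Ne.symm hj]
      · simp
    rw [hmv, hmv, hmv, ← Fin.prod_univ_three (fun i => d (σ i) * v (σ i)),
      Finset.prod_mul_distrib, Equiv.prod_comp σ d, Equiv.prod_comp σ v,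
      Fin.prod_univ_three d, Fin.prod_univ_three v]
    simp only [hd, Matrix.cons_val_zero, Matrix.cons_val_one, Matrix.head_cons, Matrix.cons_val_two, Matrix.tail_cons]
    field_simp
    try ring
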